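/- Let R = R₀ ⊕ R₁ be a ℤ/2-graded unital ℂ-algebra (so R_i·R_j ⊆ R_{i+j} for i, j ∈ ℤ/2) such that R₀ = ℂ·1 and every nonzero homogeneous element of R is invertible. Then dim_ℂ R₁ ≤ 1. Moreover, if f ∈ R₁ satisfies f² = 1, then every g ∈ R₁ with g² = 1 equals f or −f. -/
import Mathlib

lemma key_aux (R : Type*) [Ring R] [Algebra ℂ R]
    (𝒜 : ZMod 2 → Submodule ℂ R) [GradedAlgebra 𝒜]
    (h0 : ∀ x ∈ 𝒜 0, ∃ c : ℂ, x = algebraMap ℂ R c)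
    (hinv : ∀ (i : ZMod 2) (x : R), x ∈ 𝒜 i → x ≠ 0 → IsUnit x)
    (f g : R) (hf : f ∈ 𝒜 1) (hg : g ∈ 𝒜 1) (hf0 : f ≠ 0) :
    ∃ a : ℂ, g = a • f := by
  have h11 : (1 + 1 : ZMod 2) = 0 := by decide
  have hfg : f * g ∈ 𝒜 0 := by
    have := SetLike.mul_mem_graded hf hg
    rwa [h11] at this
  have hff : f * f ∈ 𝒜 0 := by
    have := SetLike.mul_mem_graded hf hf
    rwa [h11] at this
  obtain ⟨c, hc⟩ := h0 _ hfg
  obtain ⟨d, hd⟩ := h0 _ hff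
  have hfu : IsUnit f := hinv 1 f hf hf0
  have : Nontrivial R := ⟨f, 0, hf0⟩
  have hd0 : d ≠ 0 := by
    rintro rfl
    have : f * f = 0 := by simpa using hd
    exact (hfu.mul hfu).ne_zero this
  refine ⟨c * d⁻¹, ?_⟩
  have hz : f * (g - (c * d⁻¹) • f) = f * 0 := by
    rw [mul_zero, mul_sub, hc, mul_smul_comm, hd]
    rw [Algebra.algebraMap_eq_smul_one, Algebra.algebraMap_eq_smul_one, smul_smul]
    rw [mul_assoc, inv_mul_cancel₀ hd0, mul_one, sub_self]
  exact sub_eq_zero.mp (hfu.mul_left_cancel hz)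

/-- **Super Schur/Dixmier lemma, algebraic core.**
Let `R = R₀ ⊕ R₁` be a `ℤ/2`-graded unital `ℂ`-algebra such that `R₀ = ℂ·1` and every
nonzero homogeneous element of `R` is invertible.  Then `dim_ℂ R₁ ≤ 1`, and if
`f ∈ R₁` satisfies `f² = 1` then every `g ∈ R₁` with `g² = 1` equals `f` or `−f`. -/
theorem stmt_14 (R : Type*) [Ring R] [Algebra ℂ R]
    (𝒜 : ZMod 2 → Submodule ℂ R) [GradedAlgebra 𝒜]
    (h0 : ∀ x ∈ 𝒜 0, ∃ c : ℂ, x = algebraMap ℂ R c)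
    (hinv : ∀ (i : ZMod 2) (x : R), x ∈ 𝒜 i → x ≠ 0 → IsUnit x) :
    Module.rank ℂ (𝒜 1) ≤ 1 ∧
    ∀ f ∈ 𝒜 1, f * f = 1 → ∀ g ∈ 𝒜 1, g * g = 1 → g = f ∨ g = -f := by
  constructor
  · -- rank bound
    by_cases hne : ∃ f ∈ 𝒜 1, f ≠ 0
    · obtain ⟨f, hf, hf0⟩ := hne
      have hle : 𝒜 1 ≤ Submodule.span ℂ {f} := by
        intro g hg
        obtain ⟨a, rfl⟩ := key_aux R 𝒜 h0 hinv f g hf hg hf0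
        exact Submodule.smul_mem _ _ (Submodule.mem_span_singleton_self f)
      calc Module.rank ℂ (𝒜 1) ≤ Module.rank ℂ (Submodule.span ℂ ({f} : Set R)) :=
            Submodule.rank_mono hle
        _ ≤ Cardinal.mk ({f} : Set R) := rank_span_le _
        _ = 1 := Cardinal.mk_singleton f
    · push_neg at hne
      have hbot : 𝒜 1 = ⊥ := by
        rw [Submodule.eq_bot_iff]; exact hne
      rw [hbot]
      simpa using (rank_subsingleton' ℂ (⊥ : Submodule ℂ R)).le.trans (by norm_num)
  · intro f hf hf2 g hg hg2
    by_cases hf0 : f = 0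
    · subst hf0
      have : (0 : R) = 1 := by simpa using hf2
      have : Subsingleton R := subsingleton_of_zero_eq_one this
      exact Or.inl (Subsingleton.elim g 0)
    · have : Nontrivial R := ⟨f, 0, hf0⟩
      obtain ⟨a, rfl⟩ := key_aux R 𝒜 h0 hinv f (g := g) hf hg hf0
      have ha : a * a = 1 := by
        have h1 : (a • f) * (a • f) = (a * a) • (1 : R) := by
          rw [smul_mul_smul_comm, hf2]
        rw [hg2] at h1
        have h2 : algebraMap ℂ R (a * a) = algebraMap ℂ R 1 := by
          rw [Algebra.algebraMap_eq_smul_one, Algebra.algebraMap_eq_smul_one, ← h1, one_smul]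
        exact (algebraMap ℂ R).injective h2
      rcases mul_self_eq_one_iff.mp ha with rfl | rfl
      · exact Or.inl (one_smul ℂ f)
      · exact Or.inr (by rw [neg_smul, one_smul])
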